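/- The map F_S(x) = A·x·(1−p)·e^{AT} / (x·(e^{AT}−1) + A), defined for x ≥ 0 with A > 0, T > 0, and 0 ≤ p ≤ 1, has exactly two fixed points: x₁* = A·(1 − p·e^{AT}/(e^{AT}−1)) and x₂* = 0. Moreover x₁* > 0 if and only if p < 1 − e^{−AT}. -/
import Mathlib


open Real

theorem stmt_0 (A T p : ℝ) (hA : 0 < A) (hT : 0 < T) (hp0 : 0 ≤ p) (hp1 : p ≤ 1)
    (F : ℝ → ℝ)
    (hF : ∀ x : ℝ, 0 ≤ x → F x = A * x * (1 - p) * exp (A * T) / (x * (exp (A * T) - 1) + A)) :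
    (∀ x : ℝ, 0 ≤ x →
      (F x = x ↔ x = A * (1 - p * exp (A * T) / (exp (A * T) - 1)) ∨ x = 0)) ∧
    (0 < A * (1 - p * exp (A * T) / (exp (A * T) - 1)) ↔ p < 1 - exp (-(A * T))) := by
  set E := exp (A * T) with hEdef
  have hEpos : 0 < E := exp_pos (A * T)
  have hE1 : 1 < E := by
    have h := Real.add_one_lt_exp (show A * T ≠ 0 from (mul_pos hA hT).ne')
    have := mul_pos hA hT
    linarith
  have hEne : E - 1 ≠ 0 := by linarith
  have hr : A * (1 - p * E / (E - 1)) = A * (E - 1 - p * E) / (E - 1) := by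
    field_simp
  constructor
  · intro x hx
    have hden : 0 < x * (E - 1) + A := by nlinarith
    rw [hF x hx, div_eq_iff hden.ne', hr]
    constructor
    · intro h
      have key : x * (x * (E - 1) - A * (E - 1 - p * E)) = 0 := by linear_combination -h
      rcases mul_eq_zero.mp key with h1 | h1
      · right; exact h1
      · left; rw [eq_div_iff hEne]; linarith
    · rintro (h | h)
      · rw [h]; field_simp; ring
      · rw [h]; ring
  · rw [hr, Real.exp_neg, ← hEdef]
    have hfrac : 1 - E⁻¹ = (E - 1) / E := by field_simp
    constructor
    · intro h
      have hmul : A * (E - 1 - p * E) / (E - 1) * (E - 1) = A * (E - 1 - p * E) :=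
        div_mul_cancel₀ _ hEne
      have h2 : 0 < E - 1 - p * E := by nlinarith
      rw [hfrac, lt_div_iff₀ hEpos]; linarith
    · intro h
      rw [hfrac, lt_div_iff₀ hEpos] at h
      have h2 : 0 < E - 1 - p * E := by linarith
      exact div_pos (by nlinarith) (by linarith)
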